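/- Let P = ⟨p_1,…,p_k⟩ and Q = ⟨q_1,…,q_k⟩ be polygonal curves with k vertices each in ℝ^d, and let r > 0. Suppose ‖p_i − q_i‖ ≤ r for all i, and suppose that for all i ≠ j we have ‖p_i − q_j‖ > r (vertices of P and Q with different indices are far apart). Then every coupling realizing discrete Fréchet distance at most r couples p_i only with q_i; in particular d_dF(P,Q) = max_i ‖p_i − q_i‖. -/

import Mathlib

open Real

noncomputable section

abbrev Pt (d : ℕ) := EuclideanSpace ℝ (Fin d)

/-- One step of a coupling: advance the first and/or the second index by exactly 1. -/
def CouplingStep (a b : ℕ × ℕ) : Prop :=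
  (b.1 = a.1 + 1 ∧ b.2 = a.2) ∨ (b.1 = a.1 ∧ b.2 = a.2 + 1) ∨
    (b.1 = a.1 + 1 ∧ b.2 = a.2 + 1)

/-- A coupling between a curve with `k` vertices and one with `l` vertices
(0-based indices): starts at `(0,0)`, ends at `(k-1, l-1)`, monotone unit steps. -/
def IsCoupling (k l : ℕ) (c : List (ℕ × ℕ)) : Prop :=
  c.head? = some (0, 0) ∧ c.getLast? = some (k - 1, l - 1) ∧
    c.Chain' CouplingStep ∧ ∀ ij ∈ c, ij.1 < k ∧ ij.2 < l

/-- The maximum distance over the coupled pairs of a coupling. -/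
def couplingCost {d : ℕ} (P Q : List (Pt d)) (c : List (ℕ × ℕ)) : ℝ :=
  c.foldr (fun ij acc => max (dist (P.getD ij.1 0) (Q.getD ij.2 0)) acc) 0

/-- The discrete Fréchet distance between two polygonal curves, given as lists
of their vertices. -/
def dDF {d : ℕ} (P Q : List (Pt d)) : ℝ :=
  sInf { m : ℝ | ∃ c, IsCoupling P.length Q.length c ∧ m = couplingCost P Q c }

/-- The set of nearest neighbors of a query curve `Q` in a finite set `S` of
curves, under the discrete Fréchet distance. -/
def NN {d : ℕ} (S : Finset (List (Pt d))) (Q : List (Pt d)) : Set (List (Pt d)) :=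
  { P | P ∈ S ∧ ∀ P' ∈ S, dDF Q P ≤ dDF Q P' }

/-- The point of `ℝ²` with given coordinates. -/
def e2 (x y : ℝ) : Pt 2 := (WithLp.equiv 2 (Fin 2 → ℝ)).symm ![x, y]

/-- The point of `ℝ¹` with given coordinate. -/
def e1 (x : ℝ) : Pt 1 := (WithLp.equiv 2 (Fin 1 → ℝ)).symm ![x]

/-- auxiliary: foldr max dominates each entry -/
lemma le_couplingCost {d : ℕ} (P Q : List (Pt d)) (c : List (ℕ × ℕ))
    {ij : ℕ × ℕ} (h : ij ∈ c) :
    dist (P.getD ij.1 0) (Q.getD ij.2 0) ≤ couplingCost P Q c := by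
  induction c with
  | nil => simp at h
  | cons a t ih =>
    rcases List.mem_cons.mp h with rfl | h
    · exact le_max_left _ _
    · exact le_trans (ih h) (le_max_right _ _)

lemma couplingCost_le {d : ℕ} (P Q : List (Pt d)) (c : List (ℕ × ℕ)) {m : ℝ}
    (hm : 0 ≤ m) (h : ∀ ij ∈ c, dist (P.getD ij.1 0) (Q.getD ij.2 0) ≤ m) :
    couplingCost P Q c ≤ m := by
  induction c with
  | nil => exact hm
  | cons a t ih =>
    exact max_le (h a (List.mem_cons_self))
      (ih fun ij hij => h ij (List.mem_cons_of_mem _ hij))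

/-- auxiliary: a list of naturals that is a chain of steps of size 0 or 1
attains every value between its head and last element. -/
lemma chain_hits : ∀ (l : List ℕ), l.Chain' (fun a b => b = a ∨ b = a + 1) →
    ∀ a, l.head? = some a → ∀ b, l.getLast? = some b →
    ∀ m, a ≤ m → m ≤ b → m ∈ l := by
  intro l
  induction l with
  | nil => intro _ a ha; simp at ha
  | cons x t ih =>
    intro hchain a ha b hb m ham hmb
    simp only [List.head?_cons, Option.some.injEq] at ha
    subst ha
    rcases eq_or_lt_of_le ham with h | h
    · exact h ▸ List.mem_cons_self
    · cases t with
      | nil =>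
        simp only [List.getLast?_singleton, Option.some.injEq] at hb
        omega
      | cons y s =>
        have hchain' : (y :: s).Chain' (fun a b => b = a ∨ b = a + 1) :=
          (List.isChain_cons_cons.mp hchain).2
        have hxy : y = x ∨ y = x + 1 := (List.isChain_cons_cons.mp hchain).1
        have hb' : (y :: s).getLast? = some b := by
          rw [← hb]; exact (List.getLast?_cons_cons ..).symm
        have hym : y ≤ m := by omega
        exact List.mem_cons_of_mem _ (ih hchain' y rfl b hb' m hym hmb)

/-- if corresponding vertices are within distance `r` but vertices
with different indices are at distance more than `r`, then every coupling
realizing cost at most `r` couples only equal indices, and the discrete Fréchet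
distance equals the maximum distance over corresponding vertices. -/
theorem dDF_of_separated (d k : ℕ) (hk : 0 < k) (P Q : Fin k → Pt d) (r : ℝ)
    (hr : 0 < r)
    (hnear : ∀ i, dist (P i) (Q i) ≤ r)
    (hfar : ∀ i j, i ≠ j → r < dist (P i) (Q j)) :
    (∀ c, IsCoupling k k c → couplingCost (List.ofFn P) (List.ofFn Q) c ≤ r →
        ∀ ij ∈ c, ij.1 = ij.2) ∧
      dDF (List.ofFn P) (List.ofFn Q) = ⨆ i, dist (P i) (Q i) := by
  have hgetP : ∀ (i : ℕ) (h : i < k), (List.ofFn P).getD i 0 = P ⟨i, h⟩ := by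
    intro i h
    rw [List.getD_eq_getElem _ _ (by simpa using h), List.getElem_ofFn]
  have hgetQ : ∀ (i : ℕ) (h : i < k), (List.ofFn Q).getD i 0 = Q ⟨i, h⟩ := by
    intro i h
    rw [List.getD_eq_getElem _ _ (by simpa using h), List.getElem_ofFn]
  have main : ∀ c, IsCoupling k k c →
      couplingCost (List.ofFn P) (List.ofFn Q) c ≤ r →
      ∀ ij ∈ c, ij.1 = ij.2 := by
    intro c hc hcost ij hij
    obtain ⟨h1, h2⟩ := hc.2.2.2 ij hij
    by_contra hne
    have hlt : r < dist ((List.ofFn P).getD ij.1 0) ((List.ofFn Q).getD ij.2 0) := by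
      rw [hgetP _ h1, hgetQ _ h2]
      exact hfar _ _ (by simp [Fin.ext_iff, hne])
    exact absurd (le_trans (le_couplingCost _ _ _ hij) hcost) (not_le.mpr hlt)
  haveI : Nonempty (Fin k) := ⟨⟨0, hk⟩⟩
  set M := ⨆ i, dist (P i) (Q i) with hM
  have hMle : M ≤ r := ciSup_le hnear
  have hM0 : 0 ≤ M := le_trans dist_nonneg (le_ciSup (f := fun i => dist (P i) (Q i)) (Set.finite_range _).bddAbove (⟨0, hk⟩ : Fin k))
  refine ⟨main, ?_⟩
  -- the diagonal coupling
  set c0 : List (ℕ × ℕ) := (List.range k).map (fun i => (i, i)) with hc0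
  have hc0coup : IsCoupling k k c0 := by
    refine ⟨?_, ?_, ?_, ?_⟩
    · rw [hc0, List.head?_map]
      obtain ⟨m, rfl⟩ := Nat.exists_eq_succ_of_ne_zero hk.ne'
      simp [List.range_succ_eq_map]
    · rw [hc0, List.getLast?_map]
      obtain ⟨m, rfl⟩ := Nat.exists_eq_succ_of_ne_zero hk.ne'
      simp [List.range_succ]
    · rw [hc0, List.Chain', List.isChain_map]
      rw [List.isChain_iff_getElem]
      intro i hi
      simp only [List.length_range] at hi
      right; right
      constructor <;> simp [List.getElem_range]
    · intro ij hij
      simp only [hc0, List.mem_map, List.mem_range] at hij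
      obtain ⟨i, hi, rfl⟩ := hij
      exact ⟨hi, hi⟩
  have hcost0 : couplingCost (List.ofFn P) (List.ofFn Q) c0 = M := by
    apply le_antisymm
    · apply couplingCost_le _ _ _ hM0
      intro ij hij
      simp only [hc0, List.mem_map, List.mem_range] at hij
      obtain ⟨i, hi, rfl⟩ := hij
      rw [hgetP _ hi, hgetQ _ hi]
      exact le_ciSup (f := fun i => dist (P i) (Q i)) (Set.finite_range _).bddAbove (⟨i, hi⟩ : Fin k)
    · apply ciSup_le
      intro i
      have hmem : ((i : ℕ), (i : ℕ)) ∈ c0 := by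
        simp only [hc0, List.mem_map, List.mem_range]
        exact ⟨i.1, i.2, rfl⟩
      have := le_couplingCost (List.ofFn P) (List.ofFn Q) c0 hmem
      rwa [hgetP _ i.2, hgetQ _ i.2, Fin.eta] at this
  have hlen : (List.ofFn P).length = k := List.length_ofFn (f := P)
  have hlenQ : (List.ofFn Q).length = k := List.length_ofFn (f := Q)
  set S := { m : ℝ | ∃ c, IsCoupling (List.ofFn P).length (List.ofFn Q).length c ∧
      m = couplingCost (List.ofFn P) (List.ofFn Q) c } with hS
  have hMS : M ∈ S := ⟨c0, by rw [hlen, hlenQ]; exact hc0coup, hcost0.symm⟩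
  have hlb : ∀ m ∈ S, M ≤ m := by
    rintro m ⟨c, hc, rfl⟩
    rw [hlen, hlenQ] at hc
    rcases le_or_gt (couplingCost (List.ofFn P) (List.ofFn Q) c) r with hle | hgt
    · -- every pair is diagonal, and every index is hit
      apply ciSup_le
      intro i
      -- find pair with first coordinate i
      have hchain1 : (c.map Prod.fst).Chain' (fun a b => b = a ∨ b = a + 1) := by
        rw [List.Chain', List.isChain_map]
        refine List.IsChain.imp ?_ hc.2.2.1
        rintro a b (⟨h1, _⟩ | ⟨h1, _⟩ | ⟨h1, _⟩) <;> simp [h1]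
      have hhead : (c.map Prod.fst).head? = some 0 := by
        rw [List.head?_map, hc.1]; rfl
      have hlast : (c.map Prod.fst).getLast? = some (k - 1) := by
        rw [List.getLast?_map, hc.2.1]; rfl
      have hmem : (i : ℕ) ∈ c.map Prod.fst :=
        chain_hits _ hchain1 0 hhead (k-1) hlast i (Nat.zero_le _) (by omega)
      obtain ⟨ij, hij, hij1⟩ := List.mem_map.mp hmem
      have hdiag := main c hc hle ij hij
      have h2 : ij.2 < k := (hc.2.2.2 ij hij).2
      have := le_couplingCost (List.ofFn P) (List.ofFn Q) c hij
      rw [hgetP ij.1 (hij1 ▸ i.2), hgetQ ij.2 h2] at this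
      have : dist (P i) (Q i) ≤ couplingCost (List.ofFn P) (List.ofFn Q) c := by
        convert this using 3 <;> simp [Fin.ext_iff, ← hij1, hdiag]
      exact this
    · exact le_of_lt (lt_of_le_of_lt hMle hgt)
  exact le_antisymm (csInf_le ⟨M, hlb⟩ hMS) (le_csInf ⟨M, hMS⟩ hlb)
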